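/- Let G be an n×n row-stochastic matrix, let μ, μ̂ ∈ ℝ^n be positive vectors, set r_* := minᵢ(μᵢ/μ̂ᵢ), r* := maxᵢ(μᵢ/μ̂ᵢ), c* := 1/r*, and define α* ∈ ℝ^n by α*ᵢ = 1 − c*·μᵢ/μ̂ᵢ. Then for all i, j: |Δ(α*)_{i,j}| ≤ ((r* − r_*)/r*)·|(I − G)_{i,j}|, where Δ(α*) := D(α*)(I − G). -/
import Mathlib


open Matrix BigOperators

/-- With `r_* = minᵢ (μᵢ/μ̂ᵢ)`, `r* = maxᵢ (μᵢ/μ̂ᵢ)`,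
`c* = 1/r*`, and `α*ᵢ = 1 − c*·μᵢ/μ̂ᵢ`, the perturbation
`Δ(α*) = D(α*)(I − G)` satisfies
`|Δ(α*)_{ij}| ≤ ((r* − r_*)/r*)·|(I − G)_{ij}|` for all `i, j`. -/
theorem stmt5 {n : ℕ} (G : Matrix (Fin n) (Fin n) ℝ)
    (hGnonneg : ∀ i j, 0 ≤ G i j) (hGrow : ∀ i, ∑ j, G i j = 1)
    (μ μh : Fin n → ℝ) (hμpos : ∀ i, 0 < μ i) (hμhpos : ∀ i, 0 < μh i)
    (rlow rstar cstar : ℝ)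
    (hrlow : rlow = ⨅ i, μ i / μh i) (hrstar : rstar = ⨆ i, μ i / μh i)
    (hcstar : cstar = 1 / rstar)
    (αstar : Fin n → ℝ) (hαstar : ∀ i, αstar i = 1 - cstar * (μ i / μh i)) :
    ∀ i j, |(Matrix.diagonal αstar * (1 - G)) i j| ≤
      ((rstar - rlow) / rstar) * |(1 - G) i j| := by
  intro i j
  haveI : Nonempty (Fin n) := ⟨i⟩
  have hle : ∀ k, μ k / μh k ≤ rstar := by
    intro k
    rw [hrstar]
    exact le_ciSup (f := fun k => μ k / μh k) (Set.Finite.bddAbove (Set.finite_range _)) k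
  have hge : ∀ k, rlow ≤ μ k / μh k := by
    intro k
    rw [hrlow]
    exact ciInf_le (f := fun k => μ k / μh k) (Set.Finite.bddBelow (Set.finite_range _)) k
  have hrpos : 0 < rstar := lt_of_lt_of_le (div_pos (hμpos i) (hμhpos i)) (hle i)
  have habs : |αstar i| ≤ (rstar - rlow) / rstar := by
    rw [hαstar, hcstar]
    rw [abs_le]
    constructor
    · have := hle i
      have h1 : 1 / rstar * (μ i / μh i) ≤ 1 := by
        rw [one_div, inv_mul_le_iff₀ hrpos]
        simpa using this
      have h2 : (0:ℝ) ≤ (rstar - rlow) / rstar := by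
        apply div_nonneg _ hrpos.le
        linarith [hge i, hle i]
      linarith
    · have := hge i
      have h1 : rlow / rstar ≤ 1 / rstar * (μ i / μh i) := by
        rw [one_div, inv_mul_eq_div]
        exact div_le_div_of_nonneg_right this hrpos.le
      have h2 : (rstar - rlow) / rstar = 1 - rlow / rstar := by
        field_simp
      linarith
  have hdiag : (Matrix.diagonal αstar * (1 - G)) i j = αstar i * (1 - G) i j := by
    simp [Matrix.diagonal_mul]
  rw [hdiag, abs_mul]
  exact mul_le_mul_of_nonneg_right habs (abs_nonneg _)
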